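/- Let d ≥ 1, let S be a finite set of points in ℝ^d, let k be an integer with 1 ≤ k ≤ |S|, let σ : {1,…,k} → S be injective, and let c ∈ ℝ^d. Then ⟨c,σ(1)⟩ > ⟨c,σ(2)⟩ > … > ⟨c,σ(k)⟩ together with ⟨c,σ(k)⟩ > ⟨c,s⟩ for all s ∈ S outside the image of σ holds if and only if p = Σ_{i=1}^k (k+1−i)·σ(i) is the unique maximizer of x ↦ ⟨c,x⟩ over the ordered k-set polytope P_k(S), i.e. ⟨c,p⟩ > ⟨c,x⟩ for every x ∈ P_k(S) with x ≠ p. -/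
import Mathlib


open scoped RealInnerProductSpace Pointwise
open MeasureTheory

attribute [local instance] Classical.decEq

noncomputable section

abbrev E (d : ℕ) := EuclideanSpace ℝ (Fin d)

/-- The unordered k-set polytope `Q_k(S)`: convex hull of the points `∑_{s ∈ A} s`
where `A` ranges over k-element subsets of `S`. -/
def unorderedKSetPolytope (d k : ℕ) (S : Finset (E d)) : Set (E d) :=
  convexHull ℝ {p | ∃ A : Finset (E d), A ⊆ S ∧ A.card = k ∧ p = ∑ s ∈ A, s}

/-- The ordered k-set polytope `P_k(S)`: convex hull of the points
`∑_{i=1}^k (k+1-i) • σ(i)` (here `σ` is 0-indexed, so the weight of `σ i` is `k - i`)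
where `σ` ranges over injective maps from `{1,…,k}` into `S`. -/
def orderedKSetPolytope (d k : ℕ) (S : Finset (E d)) : Set (E d) :=
  convexHull ℝ {p | ∃ σ : Fin k → E d, Function.Injective σ ∧ (∀ i, σ i ∈ S) ∧
    p = ∑ i : Fin k, ((k - (i : ℕ) : ℕ) : ℝ) • σ i}

/-- The normal cone of a set `P` at a point `p`. -/
def normalCone {d : ℕ} (P : Set (E d)) (p : E d) : Set (E d) :=
  {c | ∀ x ∈ P, ⟪c, x⟫ ≤ ⟪c, p⟫}


/-- If `T` consists of points whose `v`-value strictly exceeds that of every point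
of `S` outside `T`, then `T` has strictly maximal `v`-sum among subsets of `S`
of its cardinality. -/
lemma sum_lt_of_sep {α : Type*} [DecidableEq α] (v : α → ℝ) (S T A : Finset α)
    (hTS : T ⊆ S) (hAS : A ⊆ S) (hcard : A.card = T.card)
    (hsep : ∀ t ∈ T, ∀ s ∈ S, s ∉ T → v s < v t) (hne : A ≠ T) :
    ∑ x ∈ A, v x < ∑ x ∈ T, v x := by
  have hAne : (A \ T).Nonempty := by
    rw [Finset.sdiff_nonempty]
    intro h
    exact hne (Finset.eq_of_subset_of_card_le h (le_of_eq hcard.symm))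
  have hTne : (T \ A).Nonempty := by
    rw [Finset.sdiff_nonempty]
    intro h
    exact hne (Finset.eq_of_subset_of_card_le h (le_of_eq hcard)).symm
  have hcards : (A \ T).card = (T \ A).card := by
    have h1 := Finset.card_sdiff_add_card_inter A T
    have h2 := Finset.card_sdiff_add_card_inter T A
    rw [Finset.inter_comm] at h2
    omega
  obtain ⟨m, hmTA, hmin⟩ := Finset.exists_min_image (T \ A) v hTne
  have h1 : ∑ x ∈ A \ T, v x < ∑ x ∈ A \ T, v m := by
    apply Finset.sum_lt_sum_of_nonempty hAne
    intro x hx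
    exact hsep m (Finset.mem_sdiff.mp hmTA).1 x (hAS (Finset.mem_sdiff.mp hx).1)
      (Finset.mem_sdiff.mp hx).2
  have h2 : ∑ x ∈ T \ A, v m ≤ ∑ x ∈ T \ A, v x := Finset.sum_le_sum hmin
  have h3 : ∑ x ∈ A \ T, v m = ∑ x ∈ T \ A, v m := by
    rw [Finset.sum_const, Finset.sum_const, hcards]
  have hA := Finset.sum_inter_add_sum_sdiff A T v
  have hT := Finset.sum_inter_add_sum_sdiff T A v
  rw [Finset.inter_comm] at hT
  linarith

lemma sum_le_of_sep {α : Type*} [DecidableEq α] (v : α → ℝ) (S T A : Finset α)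
    (hTS : T ⊆ S) (hAS : A ⊆ S) (hcard : A.card = T.card)
    (hsep : ∀ t ∈ T, ∀ s ∈ S, s ∉ T → v s < v t) :
    ∑ x ∈ A, v x ≤ ∑ x ∈ T, v x := by
  rcases eq_or_ne A T with rfl | hne
  · exact le_rfl
  · exact (sum_lt_of_sep v S T A hTS hAS hcard hsep hne).le

lemma weight_sum (k : ℕ) (g : Fin k → ℝ) :
    ∑ i : Fin k, ((k - (i : ℕ) : ℕ) : ℝ) * g i =
      ∑ j : Fin k, ∑ i ∈ Finset.Iic j, g i := by
  have h1 : ∀ i : Fin k, ((k - (i : ℕ) : ℕ) : ℝ) * g i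
      = ∑ j : Fin k, (if i ≤ j then g i else 0) := by
    intro i
    have : ∑ j : Fin k, (if i ≤ j then g i else 0)
        = ∑ j ∈ Finset.Ici i, g i := by
      rw [← Finset.filter_le_eq_Ici, ← Finset.sum_filter]
    rw [this, Finset.sum_const, Fin.card_Ici, nsmul_eq_mul]
  have h2 : ∀ j : Fin k, ∑ i ∈ Finset.Iic j, g i
      = ∑ i : Fin k, (if i ≤ j then g i else 0) := by
    intro j
    rw [← Finset.filter_ge_eq_Iic, Finset.sum_filter]
  simp_rw [h1, h2]
  exact Finset.sum_comm

/-- The key rearrangement inequality: if `c` strictly ranks `σ` first, then any other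
injective `τ` into `S` gives a strictly smaller weighted sum. -/
lemma key_lt (d k : ℕ) (S : Finset (E d)) (hk1 : 1 ≤ k) (σ τ : Fin k → E d)
    (hσinj : Function.Injective σ) (hσS : ∀ i, σ i ∈ S)
    (hτinj : Function.Injective τ) (hτS : ∀ i, τ i ∈ S) (c : E d)
    (H1 : ∀ i j : Fin k, i < j → ⟪c, σ j⟫ < ⟪c, σ i⟫)
    (H2 : ∀ s ∈ S, s ∉ Set.range σ → ⟪c, s⟫ < ⟪c, σ ⟨k - 1, by omega⟩⟫)
    (hne : τ ≠ σ) :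
    ∑ i : Fin k, ((k - (i : ℕ) : ℕ) : ℝ) * ⟪c, τ i⟫ <
      ∑ i : Fin k, ((k - (i : ℕ) : ℕ) : ℝ) * ⟪c, σ i⟫ := by
  set v : E d → ℝ := fun s => ⟪c, s⟫ with hv
  -- monotonicity of v ∘ σ
  have hmono : ∀ i j : Fin k, i ≤ j → v (σ j) ≤ v (σ i) := by
    intro i j hij
    rcases eq_or_lt_of_le hij with rfl | h
    · exact le_rfl
    · exact (H1 i j h).le
  -- the separation property of the prefix sets
  have hsep : ∀ j : Fin k, ∀ t ∈ (Finset.Iic j).image σ, ∀ s ∈ S,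
      s ∉ (Finset.Iic j).image σ → v s < v t := by
    intro j t ht s hs hsn
    obtain ⟨i', hi', rfl⟩ := Finset.mem_image.mp ht
    rw [Finset.mem_Iic] at hi'
    by_cases hr : s ∈ Set.range σ
    · obtain ⟨l, rfl⟩ := hr
      have hl : ¬ l ≤ j := by
        intro h
        exact hsn (Finset.mem_image.mpr ⟨l, Finset.mem_Iic.mpr h, rfl⟩)
      exact lt_of_lt_of_le (H1 i' l (lt_of_le_of_lt hi' (not_le.mp hl)))
        (hmono i' i' le_rfl) |>.trans_le le_rfl |>.trans_le le_rfl
    · have hlast : (i' : Fin k) ≤ ⟨k - 1, by omega⟩ := by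
        rcases i' with ⟨iv, hiv⟩
        exact Fin.mk_le_mk.mpr (by omega)
      exact lt_of_lt_of_le (H2 s hs hr) (hmono i' ⟨k - 1, by omega⟩ hlast)
  -- prefix sums compare
  have hprefix_le : ∀ j : Fin k, ∑ i ∈ Finset.Iic j, v (τ i) ≤ ∑ i ∈ Finset.Iic j, v (σ i) := by
    intro j
    have hA : ∑ i ∈ Finset.Iic j, v (τ i) = ∑ x ∈ (Finset.Iic j).image τ, v x :=
      (Finset.sum_image (fun a _ b _ h => hτinj h)).symm
    have hT : ∑ i ∈ Finset.Iic j, v (σ i) = ∑ x ∈ (Finset.Iic j).image σ, v x :=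
      (Finset.sum_image (fun a _ b _ h => hσinj h)).symm
    rw [hA, hT]
    exact sum_le_of_sep v S _ _
      (fun x hx => by obtain ⟨i, _, rfl⟩ := Finset.mem_image.mp hx; exact hσS i)
      (fun x hx => by obtain ⟨i, _, rfl⟩ := Finset.mem_image.mp hx; exact hτS i)
      (by rw [Finset.card_image_of_injective _ hτinj, Finset.card_image_of_injective _ hσinj])
      (hsep j)
  -- minimal differing index gives a strict prefix inequality
  have hex : ∃ n : ℕ, ∃ h : n < k, τ ⟨n, h⟩ ≠ σ ⟨n, h⟩ := by
    obtain ⟨i, hi⟩ := Function.ne_iff.mp hne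
    exact ⟨i, i.isLt, by simpa using hi⟩
  classical
  let n₀ := Nat.find hex
  obtain ⟨hn₀k, hn₀ne⟩ := Nat.find_spec hex
  set j₀ : Fin k := ⟨n₀, hn₀k⟩ with hj₀
  have hbefore : ∀ i : Fin k, i < j₀ → τ i = σ i := by
    intro i hi
    by_contra h
    exact Nat.find_min hex (show (i : ℕ) < n₀ from hi) ⟨i.isLt, by simpa using h⟩
  have himne : (Finset.Iic j₀).image τ ≠ (Finset.Iic j₀).image σ := by
    intro heq
    have hτmem : τ j₀ ∈ (Finset.Iic j₀).image σ := by
      rw [← heq]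
      exact Finset.mem_image.mpr ⟨j₀, Finset.mem_Iic.mpr le_rfl, rfl⟩
    obtain ⟨l, hl, hlτ⟩ := Finset.mem_image.mp hτmem
    rw [Finset.mem_Iic] at hl
    rcases eq_or_lt_of_le hl with rfl | hlt
    · exact hn₀ne hlτ.symm
    · have := hbefore l hlt
      rw [← this] at hlτ
      have : l = j₀ := hτinj hlτ
      omega
  have hstrict : ∑ i ∈ Finset.Iic j₀, v (τ i) < ∑ i ∈ Finset.Iic j₀, v (σ i) := by
    have hA : ∑ i ∈ Finset.Iic j₀, v (τ i) = ∑ x ∈ (Finset.Iic j₀).image τ, v x :=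
      (Finset.sum_image (fun a _ b _ h => hτinj h)).symm
    have hT : ∑ i ∈ Finset.Iic j₀, v (σ i) = ∑ x ∈ (Finset.Iic j₀).image σ, v x :=
      (Finset.sum_image (fun a _ b _ h => hσinj h)).symm
    rw [hA, hT]
    exact sum_lt_of_sep v S _ _
      (fun x hx => by obtain ⟨i, _, rfl⟩ := Finset.mem_image.mp hx; exact hσS i)
      (fun x hx => by obtain ⟨i, _, rfl⟩ := Finset.mem_image.mp hx; exact hτS i)
      (by rw [Finset.card_image_of_injective _ hτinj, Finset.card_image_of_injective _ hσinj])
      (hsep j₀) himne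
  rw [weight_sum k (fun i => v (τ i)), weight_sum k (fun i => v (σ i))]
  exact Finset.sum_lt_sum (fun j _ => hprefix_le j) ⟨j₀, Finset.mem_univ _, hstrict⟩


/-- `⟨c,σ(1)⟩ > … > ⟨c,σ(k)⟩ > ⟨c,s⟩` for all `s ∈ S` outside the image of `σ` iff
`∑_i (k+1-i) • σ(i)` is the unique maximizer of `x ↦ ⟨c,x⟩` over the ordered
k-set polytope. -/
theorem strict_ranking_iff_unique_max_ordered
    (d : ℕ) (hd : 1 ≤ d) (S : Finset (E d)) (k : ℕ) (hk1 : 1 ≤ k) (hk2 : k ≤ S.card)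
    (σ : Fin k → E d) (hσinj : Function.Injective σ) (hσS : ∀ i, σ i ∈ S) (c : E d) :
    ((∀ i j : Fin k, i < j → ⟪c, σ j⟫ < ⟪c, σ i⟫) ∧
        ∀ s ∈ S, s ∉ Set.range σ → ⟪c, s⟫ < ⟪c, σ ⟨k - 1, by omega⟩⟫) ↔
      (∀ x ∈ orderedKSetPolytope d k S,
        x ≠ ∑ i : Fin k, ((k - (i : ℕ) : ℕ) : ℝ) • σ i →
          ⟪c, x⟫ < ⟪c, ∑ i : Fin k, ((k - (i : ℕ) : ℕ) : ℝ) • σ i⟫) := by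
  classical
  set w : Fin k → ℝ := fun i => ((k - (i : ℕ) : ℕ) : ℝ) with hw
  set p : E d := ∑ i : Fin k, ((k - (i : ℕ) : ℕ) : ℝ) • σ i with hp
  have hfsum : ∀ τ : Fin k → E d,
      ⟪c, ∑ i : Fin k, ((k - (i : ℕ) : ℕ) : ℝ) • τ i⟫
        = ∑ i : Fin k, ((k - (i : ℕ) : ℕ) : ℝ) * ⟪c, τ i⟫ := by
    intro τ
    rw [inner_sum]
    exact Finset.sum_congr rfl fun i _ => real_inner_smul_right c (τ i) _
  constructor
  · rintro ⟨H1, H2⟩ x hx hne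
    -- every generator has value ≤ ⟪c,p⟫, strictly unless it equals p
    have hG : ∀ g, (∃ τ : Fin k → E d, Function.Injective τ ∧ (∀ i, τ i ∈ S) ∧
        g = ∑ i : Fin k, ((k - (i : ℕ) : ℕ) : ℝ) • τ i) →
        ⟪c, g⟫ ≤ ⟪c, p⟫ ∧ (g ≠ p → ⟪c, g⟫ < ⟪c, p⟫) := by
      rintro g ⟨τ, hτinj, hτS, rfl⟩
      rcases eq_or_ne τ σ with rfl | hτσ
      · exact ⟨le_rfl, fun h => absurd rfl h⟩
      · have hlt := key_lt d k S hk1 σ τ hσinj hσS hτinj hτS c H1 H2 hτσ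
        rw [← hfsum, ← hfsum] at hlt
        exact ⟨hlt.le, fun _ => hlt⟩
    rw [orderedKSetPolytope, convexHull_eq] at hx
    obtain ⟨ι, t, wt, z, hw0, hw1, hz, hxeq⟩ := hx
    have hxsum : x = ∑ i ∈ t, wt i • z i := by
      rw [← hxeq, Finset.centerMass_eq_of_sum_1 _ _ hw1]
    have hfx : ⟪c, x⟫ = ∑ i ∈ t, wt i * ⟪c, z i⟫ := by
      rw [hxsum, inner_sum]
      exact Finset.sum_congr rfl fun i _ => real_inner_smul_right c (z i) _
    have hle : ∀ i ∈ t, wt i * ⟪c, z i⟫ ≤ wt i * ⟪c, p⟫ := fun i hi =>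
      mul_le_mul_of_nonneg_left (hG (z i) (hz i hi)).1 (hw0 i hi)
    have hsumM : ∑ i ∈ t, wt i * ⟪c, p⟫ = ⟪c, p⟫ := by
      rw [← Finset.sum_mul, hw1, one_mul]
    have hxle : ⟪c, x⟫ ≤ ⟪c, p⟫ := by
      rw [hfx, ← hsumM]
      exact Finset.sum_le_sum hle
    rcases lt_or_eq_of_le hxle with h | heq
    · exact h
    · exfalso
      apply hne
      have hzero : ∑ i ∈ t, (wt i * ⟪c, p⟫ - wt i * ⟪c, z i⟫) = 0 := by
        rw [Finset.sum_sub_distrib, hsumM, ← hfx, heq, sub_self]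
      have hterm : ∀ i ∈ t, wt i * ⟪c, p⟫ - wt i * ⟪c, z i⟫ = 0 := by
        rw [← Finset.sum_eq_zero_iff_of_nonneg (fun i hi => sub_nonneg.mpr (hle i hi))]
        exact hzero
      have hzp : ∀ i ∈ t, wt i • z i = wt i • p := by
        intro i hi
        rcases eq_or_ne (wt i) 0 with h0 | h0
        · rw [h0, zero_smul, zero_smul]
        · have : ⟪c, z i⟫ = ⟪c, p⟫ := by
            have := hterm i hi
            have := mul_left_cancel₀ h0 (by linarith : wt i * ⟪c, p⟫ = wt i * ⟪c, z i⟫)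
            linarith
          by_contra hne2
          have hzi : z i ≠ p := fun h => hne2 (by rw [h])
          exact absurd this (ne_of_lt ((hG (z i) (hz i hi)).2 hzi))
      rw [hxsum, Finset.sum_congr rfl hzp, ← Finset.sum_smul, hw1, one_smul]
  · intro hmax
    constructor
    · intro i j hij
      set e := Equiv.swap i j with he
      set g : E d := ∑ l : Fin k, ((k - (l : ℕ) : ℕ) : ℝ) • (σ ∘ e) l with hg
      have hgmem : g ∈ orderedKSetPolytope d k S :=
        subset_convexHull ℝ _ ⟨σ ∘ e, hσinj.comp e.injective, fun l => hσS _, rfl⟩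
      have hre : g = ∑ l : Fin k, w (e l) • σ l := by
        rw [hg]
        calc ∑ l : Fin k, w l • σ (e l)
            = ∑ l : Fin k, w (e (e l)) • σ (e l) := by
              refine Finset.sum_congr rfl fun l _ => ?_
              rw [Equiv.swap_apply_self]
          _ = ∑ l : Fin k, w (e l) • σ l := Equiv.sum_comp e (fun l => w (e l) • σ l)
      have hdiff : g - p = ((j : ℝ) - (i : ℝ)) • (σ j - σ i) := by
        rw [hre, hp, ← Finset.sum_sub_distrib]
        have hz0 : ∀ l ∈ Finset.univ, l ∉ ({i, j} : Finset (Fin k)) →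
            w (e l) • σ l - w l • σ l = 0 := by
          intro l _ hl
          simp only [Finset.mem_insert, Finset.mem_singleton, not_or] at hl
          rw [he, Equiv.swap_apply_of_ne_of_ne hl.1 hl.2, sub_self]
        rw [← Finset.sum_subset (Finset.subset_univ ({i, j} : Finset (Fin k))) hz0,
          Finset.sum_pair hij.ne]
        have hei : e i = j := Equiv.swap_apply_left i j
        have hej : e j = i := Equiv.swap_apply_right i j
        rw [hei, hej]
        have hwi : w i = (k : ℝ) - (i : ℝ) := by
          rw [hw]; push_cast [Nat.cast_sub i.isLt.le]; ring
        have hwj : w j = (k : ℝ) - (j : ℝ) := by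
          rw [hw]; push_cast [Nat.cast_sub j.isLt.le]; ring
        rw [hwi, hwj]
        module
      have hgne : g ≠ p := by
        intro h
        have h0 : ((j : ℝ) - (i : ℝ)) • (σ j - σ i) = 0 := by
          rw [← hdiff, h, sub_self]
        have hij' : ((j : ℝ) - (i : ℝ)) ≠ 0 := by
          have : (i : ℕ) < (j : ℕ) := hij
          have : (i : ℝ) < (j : ℝ) := by exact_mod_cast this
          linarith
        have := (smul_eq_zero.mp h0).resolve_left hij'
        have hσeq : σ j = σ i := sub_eq_zero.mp this
        exact hσinj.ne hij.ne' (hσinj hσeq ▸ rfl)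
      have hlt := hmax g hgmem hgne
      have hinner : ⟪c, g⟫ - ⟪c, p⟫ = ((j : ℝ) - (i : ℝ)) * (⟪c, σ j⟫ - ⟪c, σ i⟫) := by
        rw [← inner_sub_right, hdiff, real_inner_smul_right, inner_sub_right]
      have hpos : (0 : ℝ) < (j : ℝ) - (i : ℝ) := by
        have : (i : ℕ) < (j : ℕ) := hij
        have : (i : ℝ) < (j : ℝ) := by exact_mod_cast this
        linarith
      nlinarith
    · intro s hs hsr
      set m : Fin k := ⟨k - 1, by omega⟩ with hm
      set τ : Fin k → E d := Function.update σ m s with hτ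
      have hτinj : Function.Injective τ := by
        intro a b hab
        rw [hτ] at hab
        rcases eq_or_ne a m with rfl | ha <;> rcases eq_or_ne b m with rfl | hb
        · rfl
        · rw [Function.update_self, Function.update_of_ne hb] at hab
          exact absurd ⟨b, hab.symm⟩ hsr
        · rw [Function.update_self, Function.update_of_ne ha] at hab
          exact absurd ⟨a, hab⟩ hsr
        · rw [Function.update_of_ne ha, Function.update_of_ne hb] at hab
          exact hσinj hab
      have hτS : ∀ l, τ l ∈ S := by
        intro l
        rcases eq_or_ne l m with rfl | hl
        · rw [hτ, Function.update_self]; exact hs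
        · rw [hτ, Function.update_of_ne hl]; exact hσS l
      set g : E d := ∑ l : Fin k, ((k - (l : ℕ) : ℕ) : ℝ) • τ l with hg
      have hgmem : g ∈ orderedKSetPolytope d k S :=
        subset_convexHull ℝ _ ⟨τ, hτinj, hτS, rfl⟩
      have hdiff : g - p = s - σ m := by
        rw [hg, hp, ← Finset.sum_sub_distrib]
        have hz0 : ∀ l ∈ Finset.univ, l ∉ ({m} : Finset (Fin k)) →
            w l • τ l - w l • σ l = 0 := by
          intro l _ hl
          rw [Finset.mem_singleton] at hl
          rw [hτ, Function.update_of_ne hl, sub_self]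
        rw [← Finset.sum_subset (Finset.subset_univ ({m} : Finset (Fin k))) hz0,
          Finset.sum_singleton]
        have hwm : w m = 1 := by
          have hmv : (m : ℕ) = k - 1 := rfl
          have h1 : k - (m : ℕ) = 1 := by omega
          rw [hw]
          simp only [h1, Nat.cast_one]
        rw [hτ, Function.update_self]
        show w m • s - w m • σ m = s - σ m
        rw [hwm, one_smul, one_smul]
      have hgne : g ≠ p := by
        intro h
        have : s - σ m = 0 := by rw [← hdiff, h, sub_self]
        exact hsr ⟨m, (sub_eq_zero.mp this).symm⟩
      have hlt := hmax g hgmem hgne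
      have hinner : ⟪c, g⟫ - ⟪c, p⟫ = ⟪c, s⟫ - ⟪c, σ m⟫ := by
        rw [← inner_sub_right, hdiff, inner_sub_right]
      have : ⟪c, s⟫ < ⟪c, σ m⟫ := by linarith
      exact this


end
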